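/- Let α > 2β > 0 with gcd(α,β) = 1 and let ᾱ = α/gcd(α,2β). Define F': Z → Z by F'(z) = z + 4β if z mod α < α - 2β, and F'(z) = z - 2(α - 2β) otherwise. If ᾱ is odd, then every orbit of F' is periodic with period ᾱ. -/

import Mathlib

open Finset

/-- The reduced interval-exchange map F' on ℤ. -/
def Fred (α β : ℤ) (z : ℤ) : ℤ :=
  if z % α < α - 2 * β then z + 4 * β else z - 2 * (α - 2 * β)

/-- Counting integers in an interval of length `L` (a multiple of `g`) congruent to `v` mod `g`. -/
private lemma card_Ico_filter_modEq (g a L v : ℤ) (hg : 0 < g) (hL0 : 0 ≤ L) (hL : g ∣ L) :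
    (#{x ∈ Finset.Ico a (a + L) | x ≡ v [ZMOD g]} : ℤ) = L / g := by
  obtain ⟨c, rfl⟩ := hL
  have hc : 0 ≤ c := by by_contra h; push_neg at h; nlinarith
  have hg' : (g : ℚ) ≠ 0 := by exact_mod_cast hg.ne'
  rw [Int.Ico_filter_modEq_card _ _ hg v]
  push_cast
  have h1 : ((a : ℚ) + (g : ℚ) * (c : ℚ) - (v : ℚ)) / (g : ℚ)
      = ((a : ℚ) - (v : ℚ)) / (g : ℚ) + (c : ℚ) := by
    field_simp
    ring
  rw [h1, Int.ceil_add_intCast, add_sub_cancel_left, Int.mul_ediv_cancel_left _ hg.ne',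
    max_eq_left hc]

/-- Closed form for the iterates of `Fred`. -/
private lemma fred_iter (α β z : ℤ) (hα : 0 < α) (n : ℕ) :
    (Fred α β)^[n] z = z + 4 * n * β -
      2 * α * (Finset.filter (fun i : ℕ => ¬ (z + 4 * (i : ℤ) * β) % α < α - 2 * β)
        (Finset.range n)).card := by
  induction n with
  | zero => simp
  | succ n ih =>
    rw [Function.iterate_succ_apply', ih, Fred]
    set C : ℕ := (Finset.filter (fun i : ℕ => ¬ (z + 4 * (i : ℤ) * β) % α < α - 2 * β)
      (Finset.range n)).card with hC
    have h1 : (z + 4 * (n : ℤ) * β - 2 * α * (C : ℤ)) % α = (z + 4 * (n : ℤ) * β) % α := by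
      have he : z + 4 * (n : ℤ) * β - 2 * α * (C : ℤ)
          = z + 4 * (n : ℤ) * β - α * (2 * (C : ℤ)) := by ring
      rw [he, Int.sub_emod, Int.mul_emod_right, sub_zero, Int.emod_emod_of_dvd _ dvd_rfl]
    rw [Finset.range_add_one, Finset.filter_insert]
    by_cases hc : (z + 4 * (n : ℤ) * β) % α < α - 2 * β
    · rw [if_pos (by rwa [h1]), if_neg (not_not_intro hc)]
      push_cast
      ring
    · rw [if_neg (by rwa [h1]), if_pos hc,
        Finset.card_insert_of_notMem (by simp)]
      push_cast
      ring

/-- `α ∣ 4kβ` iff `ᾱ ∣ k`. -/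
private lemma order_lemma (α β : ℤ) (hβ : 0 < β) (hα : 0 < α) (hgcd : Int.gcd α β = 1)
    (abar : ℕ) (habar : (abar : ℤ) = α / Int.gcd α (2 * β)) (hodd : Odd abar) (k : ℤ) :
    α ∣ 4 * k * β ↔ (abar : ℤ) ∣ k := by
  have hgposN : 0 < Int.gcd α (2 * β) := Int.gcd_pos_of_ne_zero_left _ hα.ne'
  set g : ℤ := (Int.gcd α (2 * β) : ℤ) with hg
  have hgpos : 0 < g := by rw [hg]; exact_mod_cast hgposN
  have hga : g ∣ α := Int.gcd_dvd_left _ _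
  have hgb : g ∣ 2 * β := Int.gcd_dvd_right _ _
  obtain ⟨b, hb⟩ := hgb
  have hαg : α = g * (abar : ℤ) := by
    rw [habar]; exact (Int.mul_ediv_cancel' hga).symm
  have hcop : Int.gcd (abar : ℤ) b = 1 := by
    have h := Int.gcd_div_gcd_div_gcd (i := α) (j := 2 * β) hgposN
    have hb' : (2 * β) / g = b := by
      rw [hb, Int.mul_ediv_cancel_left _ hgpos.ne']
    rw [← hg, ← habar, hb'] at h
    exact h
  have hcop2 : Int.gcd (abar : ℤ) 2 = 1 := by
    have h2 : Nat.gcd abar 2 = 1 := by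
      have hd2 := Nat.gcd_dvd_right abar 2
      have hd1 := Nat.gcd_dvd_left abar 2
      have ho := Nat.odd_iff.1 hodd
      rcases (Nat.dvd_prime Nat.prime_two).1 hd2 with h | h
      · exact h
      · rw [h] at hd1; omega
    simpa [Int.gcd] using h2
  constructor
  · rintro ⟨c, hcc⟩
    have hkey : g * ((abar : ℤ) * c) = g * (2 * k * b) := by
      linear_combination (-1 : ℤ) * hcc + (-c) * hαg + (2 * k) * hb
    have h2kb : (abar : ℤ) ∣ 2 * k * b :=
      ⟨c, (mul_left_cancel₀ hgpos.ne' hkey).symm⟩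
    have h2k : (abar : ℤ) ∣ 2 * k :=
      Int.dvd_of_dvd_mul_left_of_gcd_one h2kb hcop
    exact Int.dvd_of_dvd_mul_right_of_gcd_one h2k hcop2
  · rintro ⟨m, rfl⟩
    exact ⟨2 * m * b, by rw [hαg]; linear_combination (2 * (abar : ℤ) * m) * hb⟩

/-- The count of "second branch" steps over a full period. -/
private lemma count_lemma (α β z : ℤ) (hβ : 0 < β) (hαβ : 2 * β < α) (hgcd : Int.gcd α β = 1)
    (abar : ℕ) (habar : (abar : ℤ) = α / Int.gcd α (2 * β)) (hodd : Odd abar) :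
    2 * α * ((Finset.filter (fun i : ℕ => ¬ (z + 4 * (i : ℤ) * β) % α < α - 2 * β)
        (Finset.range abar)).card : ℤ)
      = 4 * (abar : ℤ) * β := by
  have hα : 0 < α := by linarith
  have hgposN : 0 < Int.gcd α (2 * β) := Int.gcd_pos_of_ne_zero_left _ hα.ne'
  set g : ℤ := (Int.gcd α (2 * β) : ℤ) with hg
  have hgpos : 0 < g := by rw [hg]; exact_mod_cast hgposN
  have hga : g ∣ α := Int.gcd_dvd_left _ _
  have hgb : g ∣ 2 * β := Int.gcd_dvd_right _ _
  obtain ⟨b, hb⟩ := hgb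
  have hαg : α = g * (abar : ℤ) := by
    rw [habar]; exact (Int.mul_ediv_cancel' hga).symm
  set f : ℕ → ℤ := fun i => (z + 4 * (i : ℤ) * β) % α with hf
  -- f is injective on range abar
  have hinj : Set.InjOn f (Finset.range abar) := by
    intro i hi j hj hij
    simp only [Finset.coe_range, Set.mem_Iio] at hi hj
    have hmod : z + 4 * (i : ℤ) * β ≡ z + 4 * (j : ℤ) * β [ZMOD α] := hij
    have hdvd : α ∣ 4 * ((j : ℤ) - (i : ℤ)) * β := by
      have h' := hmod.dvd
      have he : (z + 4 * (j : ℤ) * β) - (z + 4 * (i : ℤ) * β)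
          = 4 * ((j : ℤ) - (i : ℤ)) * β := by ring
      rwa [he] at h'
    have habd : (abar : ℤ) ∣ (j : ℤ) - (i : ℤ) :=
      (order_lemma α β hβ hα hgcd abar habar hodd _).1 hdvd
    have hz : (j : ℤ) - (i : ℤ) = 0 :=
      Int.eq_zero_of_abs_lt_dvd habd (by
        rw [abs_sub_lt_iff]; omega)
    omega
  -- the image of f is exactly the set of residues congruent to z mod g in [0, α)
  set T : Finset ℤ := {x ∈ Finset.Ico 0 α | x ≡ z [ZMOD g]} with hT
  have hsub : (Finset.range abar).image f ⊆ T := by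
    intro x hx
    simp only [Finset.mem_image] at hx
    obtain ⟨i, _, rfl⟩ := hx
    simp only [hT, Finset.mem_filter, Finset.mem_Ico]
    refine ⟨⟨Int.emod_nonneg _ hα.ne', Int.emod_lt_of_pos _ hα⟩, ?_⟩
    have h1 : f i ≡ z + 4 * (i : ℤ) * β [ZMOD g] := Int.emod_emod_of_dvd _ hga
    have h2 : z + 4 * (i : ℤ) * β ≡ z [ZMOD g] := by
      have hd : g ∣ 4 * (i : ℤ) * β := Dvd.dvd.trans ⟨b, hb⟩ ⟨2 * (i : ℤ), by ring⟩
      calc z + 4 * (i : ℤ) * β ≡ z + 0 [ZMOD g] :=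
            Int.ModEq.add_left z ((Int.modEq_zero_iff_dvd).2 hd)
        _ = z := by ring
    exact h1.trans h2
  have hcardT : (T.card : ℤ) = (abar : ℤ) := by
    have h := card_Ico_filter_modEq g 0 α z hgpos hα.le hga
    rw [zero_add] at h
    rw [hT, h]
    exact habar.symm
  have himg : (Finset.range abar).image f = T := by
    apply Finset.eq_of_subset_of_card_le hsub
    have h1 : ((Finset.range abar).image f).card = abar := by
      rw [Finset.card_image_of_injOn hinj, Finset.card_range]
    have h2 : T.card = abar := by exact_mod_cast hcardT
    omega
  -- transfer the count through f
  have hstep : (Finset.filter (fun i : ℕ => ¬ (z + 4 * (i : ℤ) * β) % α < α - 2 * β)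
      (Finset.range abar)).card
      = (Finset.filter (fun x : ℤ => ¬ x < α - 2 * β) T).card := by
    have hpred : Finset.filter (fun i : ℕ => ¬ (z + 4 * (i : ℤ) * β) % α < α - 2 * β)
        (Finset.range abar)
        = Finset.filter (fun i : ℕ => ¬ f i < α - 2 * β) (Finset.range abar) := rfl
    rw [hpred, ← himg, Finset.filter_image,
      Finset.card_image_of_injOn (hinj.mono (Finset.coe_subset.mpr (Finset.filter_subset _ _)))]
  -- identify the filtered set with an interval count
  have hident : Finset.filter (fun x : ℤ => ¬ x < α - 2 * β) T
      = {x ∈ Finset.Ico (α - 2 * β) α | x ≡ z [ZMOD g]} := by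
    ext x
    simp only [hT, Finset.mem_filter, Finset.mem_Ico]
    constructor
    · rintro ⟨⟨⟨h1, h2⟩, h3⟩, h4⟩
      exact ⟨⟨by omega, h2⟩, h3⟩
    · rintro ⟨⟨h1, h2⟩, h3⟩
      exact ⟨⟨⟨by omega, h2⟩, h3⟩, by omega⟩
  have hcount : (((Finset.filter (fun x : ℤ => ¬ x < α - 2 * β) T)).card : ℤ) = (2 * β) / g := by
    rw [hident]
    have h := card_Ico_filter_modEq g (α - 2 * β) (2 * β) z hgpos (by linarith) ⟨b, hb⟩
    rw [show α - 2 * β + 2 * β = α by ring] at h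
    exact h
  have hbdiv : (2 * β) / g = b := by rw [hb, Int.mul_ediv_cancel_left _ hgpos.ne']
  rw [hstep, hcount, hbdiv]
  calc 2 * α * b = 2 * (abar : ℤ) * (g * b) := by rw [hαg]; ring
    _ = 4 * (abar : ℤ) * β := by rw [← hb]; ring

theorem stmt14 (α β : ℤ) (hβ : 0 < β) (hαβ : 2 * β < α) (hgcd : Int.gcd α β = 1)
    (abar : ℕ) (habar : (abar : ℤ) = α / Int.gcd α (2 * β)) (hodd : Odd abar) :
    ∀ z : ℤ, (Fred α β)^[abar] z = z ∧
      ∀ k : ℕ, 0 < k → k < abar → (Fred α β)^[k] z ≠ z := by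
  intro z
  have hα : 0 < α := by linarith
  constructor
  · rw [fred_iter α β z hα abar]
    have h := count_lemma α β z hβ hαβ hgcd abar habar hodd
    linarith
  · intro k hk hkab hcontra
    rw [fred_iter α β z hα k] at hcontra
    set C : ℕ := (Finset.filter (fun i : ℕ => ¬ (z + 4 * (i : ℤ) * β) % α < α - 2 * β)
      (Finset.range k)).card with hC
    have hdvd : α ∣ 4 * (k : ℤ) * β := ⟨2 * (C : ℤ), by linarith⟩
    have habd : (abar : ℤ) ∣ (k : ℤ) :=
      (order_lemma α β hβ hα hgcd abar habar hodd _).1 hdvd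
    have hle : (abar : ℤ) ≤ (k : ℤ) := Int.le_of_dvd (by exact_mod_cast hk) habd
    omega
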